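/- For every positive integer n and integers d₁,…,dₙ with dᵢ ≥ 1 and Σᵢ dᵢ ≥ 5, one has 86·c₁³ ≤ c₃, and equality holds if and only if (c₁³/(c₁c₂), c₃/(c₁c₂)) = (1/16, 43/8), i.e. if and only if the Chern ratios are those of a smooth degree 6 hypersurface in ℙ⁴ (n = 1, d₁ = 5). -/

import Mathlib

open Finset

/-- `s_j = ∑ i, dᵢ^j`. -/
def sPow (n : ℕ) (d : Fin n → ℝ) (j : ℕ) : ℝ := ∑ i, (d i) ^ j

/-- `c₁ = 4 - s₁`. -/
def chern1 (n : ℕ) (d : Fin n → ℝ) : ℝ := 4 - sPow n d 1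

/-- `c₂ = (s₁² + s₂)/2 - 3(s₁ - 2)`. -/
noncomputable def chern2 (n : ℕ) (d : Fin n → ℝ) : ℝ :=
  (sPow n d 1 ^ 2 + sPow n d 2) / 2 - 3 * (sPow n d 1 - 2)

/-- `c₃ = -(s₁³ + 3s₁s₂ + 2s₃)/6 + (s₁² + s₂) - 3s₁ + 4`. -/
noncomputable def chern3 (n : ℕ) (d : Fin n → ℝ) : ℝ :=
  -(sPow n d 1 ^ 3 + 3 * sPow n d 1 * sPow n d 2 + 2 * sPow n d 3) / 6
    + (sPow n d 1 ^ 2 + sPow n d 2) - 3 * sPow n d 1 + 4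

lemma sum_pow_le_pow_sum' (n k : ℕ) (f : Fin n → ℝ) (hf : ∀ i, 0 ≤ f i) :
    ∑ i, f i ^ (k + 1) ≤ (∑ i, f i) ^ (k + 1) := by
  calc ∑ i, f i ^ (k + 1) ≤ ∑ i, f i * (∑ j, f j) ^ k := by
        refine Finset.sum_le_sum fun i _ => ?_
        rw [pow_succ']
        exact mul_le_mul_of_nonneg_left
          (pow_le_pow_left₀ (hf i)
            (Finset.single_le_sum (fun j _ => hf j) (Finset.mem_univ i)) k) (hf i)
    _ = (∑ i, f i) ^ (k + 1) := by rw [← Finset.sum_mul, pow_succ, mul_comm]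

theorem chern_ineq_86c1cube_le_c3
    (n : ℕ) (hn : 0 < n) (d : Fin n → ℤ) (hd : ∀ i, 1 ≤ d i) (hs : 5 ≤ ∑ i, d i) :
    86 * chern1 n (fun i => (d i : ℝ)) ^ 3 ≤ chern3 n (fun i => (d i : ℝ)) ∧
    (86 * chern1 n (fun i => (d i : ℝ)) ^ 3 = chern3 n (fun i => (d i : ℝ)) ↔
      (chern1 n (fun i => (d i : ℝ)) ^ 3 /
          (chern1 n (fun i => (d i : ℝ)) * chern2 n (fun i => (d i : ℝ))),
       chern3 n (fun i => (d i : ℝ)) /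
          (chern1 n (fun i => (d i : ℝ)) * chern2 n (fun i => (d i : ℝ)))) =
        ((1/16 : ℝ), (43/8 : ℝ))) := by
  set D : Fin n → ℝ := fun i => (d i : ℝ) with hD
  have hD0 : ∀ i, (0 : ℝ) ≤ D i := fun i => by
    have := hd i; simp only [hD]; exact_mod_cast le_trans zero_le_one this
  have hs1 : (5 : ℝ) ≤ sPow n D 1 := by
    have : ((5 : ℤ) : ℝ) ≤ ((∑ i, d i : ℤ) : ℝ) := by exact_mod_cast hs
    simpa [sPow, hD] using this
  have h2 : sPow n D 2 ≤ sPow n D 1 ^ 2 := by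
    have := sum_pow_le_pow_sum' n 1 D hD0
    simpa [sPow, pow_one] using this
  have h3 : sPow n D 3 ≤ sPow n D 1 ^ 3 := by
    have := sum_pow_le_pow_sum' n 2 D hD0
    simpa [sPow, pow_one] using this
  set s1 := sPow n D 1
  set s2 := sPow n D 2
  set s3 := sPow n D 3
  have hq : 0 < 17 * s1 ^ 2 - 121 * s1 + 220 := by nlinarith [sq_nonneg (34 * s1 - 121)]
  have hA : 0 ≤ (s1 / 2 - 1) * (s1 ^ 2 - s2) := by
    apply mul_nonneg <;> linarith
  have hB : 0 ≤ (s1 ^ 3 - s3) / 3 := by linarith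
  have hG : 0 ≤ 5 * (s1 - 5) * (17 * s1 ^ 2 - 121 * s1 + 220) := by
    apply mul_nonneg (by linarith) (le_of_lt hq)
  have hident : chern3 n D - 86 * chern1 n D ^ 3 =
      (s1 / 2 - 1) * (s1 ^ 2 - s2) + (s1 ^ 3 - s3) / 3 +
        5 * (s1 - 5) * (17 * s1 ^ 2 - 121 * s1 + 220) := by
    simp only [chern1, chern3]; ring
  constructor
  · linarith
  constructor
  · intro heq
    have hsum0 : (s1 / 2 - 1) * (s1 ^ 2 - s2) + (s1 ^ 3 - s3) / 3 +
        5 * (s1 - 5) * (17 * s1 ^ 2 - 121 * s1 + 220) = 0 := by linarith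
    have hGz : 5 * (s1 - 5) * (17 * s1 ^ 2 - 121 * s1 + 220) = 0 := by linarith
    have hs1eq : s1 = 5 := by
      rcases mul_eq_zero.mp hGz with h | h
      · rcases mul_eq_zero.mp h with h' | h'
        · norm_num at h'
        · linarith
      · linarith
    have hAz : (s1 / 2 - 1) * (s1 ^ 2 - s2) = 0 := by linarith
    have hs2eq : s2 = 25 := by
      rcases mul_eq_zero.mp hAz with h | h
      · rw [hs1eq] at h; norm_num at h
      · nlinarith
    have hc1 : chern1 n D = -1 := by
      show 4 - s1 = -1; rw [hs1eq]; norm_num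
    have hc2 : chern2 n D = 16 := by
      show (s1 ^ 2 + s2) / 2 - 3 * (s1 - 2) = 16; rw [hs1eq, hs2eq]; norm_num
    have hc3 : chern3 n D = -86 := by rw [← heq, hc1]; norm_num
    rw [hc1, hc2, hc3]
    norm_num
  · intro hpair
    have h1 : chern1 n D ^ 3 / (chern1 n D * chern2 n D) = 1 / 16 :=
      congrArg Prod.fst hpair
    have h2' : chern3 n D / (chern1 n D * chern2 n D) = 43 / 8 :=
      congrArg Prod.snd hpair
    have hX : chern1 n D * chern2 n D ≠ 0 := by
      intro h; rw [h, div_zero] at h1; norm_num at h1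
    rw [div_eq_iff hX] at h1 h2'
    linarith
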